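/- Let R be a commutative ring and M a free R-module of rank r with basis. Let ψ_1,…,ψ_{r−1} : M → R be R-linear maps such that Ψ = ⊕ψ_i : M → R^{r−1} is surjective with kernel L a free rank-one direct summand of M. Then the map φ := ψ_1 ∧ ψ_2 ∧ ⋯ ∧ ψ_{r−1} : ⋀^r M → M, defined by φ(m_1∧⋯∧m_r) = Σ_{k=1}^{r} (−1)^{k+1} det(ψ_i(m_j))_{j≠k} · m_k, maps ⋀^r M isomorphically onto L. -/

import Mathlib

open ExteriorAlgebra

lemma alt_eq_det_smul' {R M N : Type*} [CommRing R] [AddCommGroup M] [Module R M]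
    [AddCommGroup N] [Module R N] {m : ℕ} (e : Module.Basis (Fin m) R M)
    (f : M [⋀^Fin m]→ₗ[R] N) (v : Fin m → M) : f v = e.det v • f e := by
  have h : f = (LinearMap.toSpanSingleton R N (f e)).compAlternatingMap e.det := by
    refine Module.Basis.ext_alternating e fun i hi => ?_
    let σ : Equiv.Perm (Fin m) := Equiv.ofBijective i (Finite.injective_iff_bijective.1 hi)
    change f (⇑e ∘ σ) = (LinearMap.toSpanSingleton R N (f e)).compAlternatingMap e.det (⇑e ∘ σ)
    simp [AlternatingMap.map_perm, Module.Basis.det_self, LinearMap.toSpanSingleton_apply,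
      Units.smul_def, Int.cast_smul_eq_zsmul]
  conv_lhs => rw [h]
  simp [LinearMap.toSpanSingleton_apply]

/-- Let `R` be a commutative ring and `M` a free `R`-module of rank `r = n + 1` with a basis.
Let `ψ₀, …, ψ_{n-1} : M → R` be linear functionals such that `Ψ = ⊕ψᵢ : M → R^n` is
surjective with kernel `L` a free rank-one direct summand of `M`.  Then the map
`φ = ψ₀ ∧ ⋯ ∧ ψ_{n-1} : ⋀^{n+1} M → M`, characterized by
`φ(m₀∧⋯∧m_n) = Σ_k (−1)^k det(ψᵢ(m_j))_{j≠k} · m_k`, maps `⋀^{n+1} M` isomorphically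
onto `L`. -/
theorem wedge_of_functionals_maps_top_exterior_power_iso_onto_kernel
    {R M : Type*} [CommRing R] [AddCommGroup M] [Module R M] (n : ℕ)
    (b : Module.Basis (Fin (n + 1)) R M) (ψ : Fin n → (M →ₗ[R] R))
    (Ψ : M →ₗ[R] (Fin n → R)) (hΨ : Ψ = LinearMap.pi ψ)
    (hsurj : Function.Surjective Ψ)
    (hLfree : ∃ x : M, LinearMap.ker Ψ = Submodule.span R {x} ∧ ∀ a : R, a • x = 0 → a = 0)
    (hLsumm : ∃ Q : Submodule R M, IsCompl (LinearMap.ker Ψ) Q)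
    (φ : ↥(⋀[R]^(n + 1) M) →ₗ[R] M)
    (hφ : ∀ v : Fin (n + 1) → M,
      φ ⟨ExteriorAlgebra.ιMulti R (n + 1) v,
          ExteriorAlgebra.ιMulti_range R (n + 1) (Set.mem_range_self v)⟩ =
        ∑ k : Fin (n + 1), ((-1 : R) ^ (k : ℕ)) •
          (Matrix.det (Matrix.of fun i j : Fin n => ψ i (v (Fin.succAbove k j)))) • v k) :
    Function.Injective φ ∧ LinearMap.range φ = LinearMap.ker Ψ := by
  classical
  obtain ⟨x, hker, hx⟩ := hLfree
  obtain ⟨Q, hQ⟩ := hLsumm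
  have hxK : x ∈ LinearMap.ker Ψ := by
    rw [hker]; exact Submodule.mem_span_singleton_self x
  have hΨx : Ψ x = 0 := hxK
  have hψx : ∀ i, ψ i x = 0 := by
    intro i
    have := congrFun hΨx i
    rwa [hΨ, LinearMap.pi_apply] at this
  -- The restriction of `Ψ` to `Q` is bijective.
  set Ψ' : Q →ₗ[R] (Fin n → R) := Ψ.domRestrict Q with hΨ'
  have hinj : Function.Injective Ψ' := by
    rw [injective_iff_map_eq_zero]
    intro y hy
    have hy' : (y : M) ∈ LinearMap.ker Ψ ⊓ Q := Submodule.mem_inf.2 ⟨hy, y.2⟩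
    rw [hQ.inf_eq_bot] at hy'
    exact Subtype.ext (by simpa using hy')
  have hsurj' : Function.Surjective Ψ' := by
    intro a
    obtain ⟨m, hm⟩ := hsurj a
    have hm' : m ∈ LinearMap.ker Ψ ⊔ Q := by rw [hQ.sup_eq_top]; trivial
    obtain ⟨l, hl, y, hy, rfl⟩ := Submodule.mem_sup.1 hm'
    refine ⟨⟨y, hy⟩, ?_⟩
    have : Ψ l = 0 := hl
    simp only [hΨ', LinearMap.domRestrict_apply]
    rw [← hm, map_add, this, zero_add]
  let E : Q ≃ₗ[R] (Fin n → R) := LinearEquiv.ofBijective Ψ' ⟨hinj, hsurj'⟩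
  let q : Fin n → M := fun i => (E.symm (Pi.single i 1) : Q)
  have hqQ : ∀ i, q i ∈ Q := fun i => (E.symm (Pi.single i 1)).2
  have hΨq : ∀ i, Ψ (q i) = Pi.single i 1 := by
    intro i
    exact E.apply_symm_apply (Pi.single i 1)
  have hψq : ∀ i j, ψ i (q j) = (Pi.single j 1 : Fin n → R) i := by
    intro i j
    have := congrFun (hΨq j) i
    rwa [hΨ, LinearMap.pi_apply] at this
  -- The family `x, q 0, …, q (n-1)` is a basis of `M`.
  set cf : Fin (n + 1) → M := Fin.cons x q with hcf
  have hspan : ⊤ ≤ Submodule.span R (Set.range cf) := by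
    intro m _
    have hm' : m ∈ LinearMap.ker Ψ ⊔ Q := by rw [hQ.sup_eq_top]; trivial
    obtain ⟨l, hl, y, hy, rfl⟩ := Submodule.mem_sup.1 hm'
    refine Submodule.add_mem _ ?_ ?_
    · have : l ∈ Submodule.span R {x} := hker ▸ hl
      refine Submodule.span_le.2 ?_ this
      rintro z rfl
      exact Submodule.subset_span ⟨0, by simp [hcf]⟩
    · -- y = ∑ i, Ψ y i • q i
      have hyq : y = ∑ i, Ψ y i • q i := by
        have h1 : (⟨y, hy⟩ : Q) = E.symm (E ⟨y, hy⟩) := (E.symm_apply_apply _).symm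
        have h2 : E ⟨y, hy⟩ = ∑ i, Ψ y i • (Pi.single i 1 : Fin n → R) := by
          have : (E ⟨y, hy⟩ : Fin n → R) = Ψ y := rfl
          rw [this]
          ext j
          simp [Pi.single_apply, Finset.sum_apply]
        calc y = ((E.symm (E ⟨y, hy⟩) : Q) : M) := by rw [← h1]
        _ = ∑ i, Ψ y i • q i := by
            rw [h2, map_sum]
            push_cast
            simp only [map_smul]
            rfl
      rw [hyq]
      refine Submodule.sum_mem _ fun i _ => Submodule.smul_mem _ _ ?_
      exact Submodule.subset_span ⟨i.succ, by simp [hcf]⟩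
  have hli : LinearIndependent R cf := by
    rw [Fintype.linearIndependent_iff]
    intro g hg
    have hg' : g 0 • x + ∑ i : Fin n, g i.succ • q i = 0 := by
      rw [← hg, Fin.sum_univ_succ]
      simp [hcf]
    have hzero : ∀ j : Fin n, g j.succ = 0 := by
      intro j
      have := congrArg Ψ hg'
      rw [map_add, map_smul, hΨx, smul_zero, zero_add, map_sum, map_zero] at this
      have := congrFun this j
      simp only [Finset.sum_apply, Pi.smul_apply] at this
      rw [Finset.sum_eq_single j] at this
      · simpa [hΨq] using this
      · intro i _ hij
        simp [hΨq, Pi.single_apply, hij]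
      · simp
    have h0 : g 0 = 0 := by
      apply hx
      have hsum : ∑ i : Fin n, g i.succ • q i = 0 := by simp [hzero]
      rw [hsum, add_zero] at hg'
      exact hg'
    intro i
    refine Fin.cases h0 hzero i
  let c : Module.Basis (Fin (n + 1)) R M := Module.Basis.mk hli hspan
  have hc : ⇑c = cf := Module.Basis.coe_mk hli hspan
  -- the generator of the top exterior power
  set w : ↥(⋀[R]^(n + 1) M) :=
    ⟨ExteriorAlgebra.ιMulti R (n + 1) cf,
      ExteriorAlgebra.ιMulti_range R (n + 1) (Set.mem_range_self cf)⟩ with hw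
  -- φ w = x
  have hφw : φ w = x := by
    rw [hw, hφ cf]
    rw [Finset.sum_eq_single 0]
    · have hM : (Matrix.of fun i j : Fin n => ψ i (cf (Fin.succAbove 0 j))) = 1 := by
        ext i j
        simp only [Matrix.of_apply, Matrix.one_apply, Fin.succAbove_zero, hcf, Fin.cons_succ,
          hψq, Pi.single_apply]

      rw [hM]
      simp [hcf]
    · intro k _ hk
      have hn : 0 < n := by
        have : (k : ℕ) ≠ 0 := fun h => hk (Fin.ext h)
        omega
      have hcol : ∀ i : Fin n, (Matrix.of fun i j : Fin n => ψ i (cf (Fin.succAbove k j))) i ⟨0, hn⟩ = 0 := by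
        intro i
        have h0 : Fin.succAbove k ⟨0, hn⟩ = 0 := by
          rw [Fin.succAbove_of_castSucc_lt]
          · rfl
          · simpa [Fin.pos_iff_ne_zero] using hk
        simp only [Matrix.of_apply, h0]
        simpa [hcf] using hψx i
      rw [Matrix.det_eq_zero_of_column_eq_zero ⟨0, hn⟩ hcol]
      simp
    · simp
  -- every wedge is a multiple of w
  have hwedge : ∀ v : Fin (n + 1) → M,
      ExteriorAlgebra.ιMulti R (n + 1) v = c.det v • ExteriorAlgebra.ιMulti R (n + 1) cf := by
    intro v
    have := alt_eq_det_smul' c (ExteriorAlgebra.ιMulti R (n + 1) (M := M)) v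
    rwa [hc] at this
  -- every element of the exterior power is a multiple of w
  have hmul : ∀ z : ↥(⋀[R]^(n + 1) M), ∃ a : R, z = a • w := by
    intro z
    have hz : (z : ExteriorAlgebra R M) ∈
        Submodule.span R (Set.range (ExteriorAlgebra.ιMulti R (n + 1) (M := M))) := by
      rw [ExteriorAlgebra.ιMulti_span_fixedDegree]
      exact z.2
    have : ∃ a : R, (z : ExteriorAlgebra R M) = a • ExteriorAlgebra.ιMulti R (n + 1) cf := by
      refine Submodule.span_induction ?_ ?_ ?_ ?_ hz
      · rintro y ⟨v, rfl⟩
        exact ⟨c.det v, hwedge v⟩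
      · exact ⟨0, by simp⟩
      · rintro y₁ y₂ - - ⟨a₁, h₁⟩ ⟨a₂, h₂⟩
        exact ⟨a₁ + a₂, by rw [h₁, h₂, add_smul]⟩
      · rintro r y - ⟨a, h⟩
        exact ⟨r * a, by rw [h, smul_smul]⟩
    obtain ⟨a, ha⟩ := this
    exact ⟨a, Subtype.ext (by rw [ha]; rfl)⟩
  have hφz : ∀ z : ↥(⋀[R]^(n + 1) M), ∃ a : R, z = a • w ∧ φ z = a • x := by
    intro z
    obtain ⟨a, ha⟩ := hmul z
    exact ⟨a, ha, by rw [ha, map_smul, hφw]⟩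
  constructor
  · intro z₁ z₂ h
    obtain ⟨a₁, hz₁, hφ₁⟩ := hφz z₁
    obtain ⟨a₂, hz₂, hφ₂⟩ := hφz z₂
    have : (a₁ - a₂) • x = 0 := by
      rw [sub_smul, ← hφ₁, ← hφ₂, h, sub_self]
    have h0 := hx _ this
    rw [hz₁, hz₂, sub_eq_zero.1 h0]
  · ext m
    rw [hker]
    constructor
    · rintro ⟨z, rfl⟩
      obtain ⟨a, -, hφa⟩ := hφz z
      rw [hφa]
      exact Submodule.smul_mem _ _ (Submodule.mem_span_singleton_self x)
    · intro hm
      obtain ⟨a, rfl⟩ := Submodule.mem_span_singleton.1 hm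
      exact ⟨a • w, by rw [map_smul, hφw]⟩
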